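/- For all α ∈ [0, 2π], x(α) + 2 y(α) ≥ 3√3, with equality if and only if α = 4π/3. Consequently the line x + 2y = 3√3 is tangent to the curve γ at the point (√3 + 2π/3, √3 − π/3). -/

import Mathlib

open Real

noncomputable def gammaX (α : ℝ) : ℝ := 2 * Real.sin (α/2) - α * Real.cos (α/2)
noncomputable def gammaY (α : ℝ) : ℝ := 2 * Real.sin (α/2) + (2*π - α) * Real.cos (α/2)

noncomputable def fAux (α : ℝ) : ℝ := 6 * Real.sin (α/2) + (4*π - 3*α) * Real.cos (α/2)

lemma fAux_eq (α : ℝ) : gammaX α + 2 * gammaY α = fAux α := by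
  unfold gammaX gammaY fAux; ring

lemma fAux_hasDeriv (α : ℝ) :
    HasDerivAt fAux ((3*α - 4*π)/2 * Real.sin (α/2)) α := by
  have h1 : HasDerivAt (fun x : ℝ => x/2) (1/2) α := (hasDerivAt_id α).div_const 2
  have hsin : HasDerivAt (fun x : ℝ => Real.sin (x/2)) (Real.cos (α/2) * (1/2)) α :=
    (Real.hasDerivAt_sin _).comp α h1
  have hcos : HasDerivAt (fun x : ℝ => Real.cos (x/2)) (-Real.sin (α/2) * (1/2)) α :=
    (Real.hasDerivAt_cos _).comp α h1
  have hlin : HasDerivAt (fun x : ℝ => 4*π - 3*x) (-3) α := by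
    have h := (hasDerivAt_const α (4*π)).sub ((hasDerivAt_id α).const_mul 3)
    rw [show (0:ℝ) - 3*1 = -3 by ring] at h
    exact h
  have : HasDerivAt fAux (6 * (Real.cos (α/2) * (1/2)) + (-3 * Real.cos (α/2) + (4*π - 3*α) * (-Real.sin (α/2) * (1/2)))) α :=
    ((hsin.const_mul 6).add (hlin.mul hcos))
  convert this using 1
  ring

lemma sin_2pi3 : Real.sin (2*π/3) = Real.sqrt 3 / 2 := by
  have : (2*π/3 : ℝ) = π - π/3 := by ring
  rw [this, Real.sin_pi_sub, Real.sin_pi_div_three]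

lemma cos_2pi3 : Real.cos (2*π/3) = -(1/2) := by
  have : (2*π/3 : ℝ) = π - π/3 := by ring
  rw [this, Real.cos_pi_sub, Real.cos_pi_div_three]

lemma fAux_val : fAux (4*π/3) = 3 * Real.sqrt 3 := by
  unfold fAux
  have h : (4*π/3)/2 = 2*π/3 := by ring
  rw [h, sin_2pi3, cos_2pi3]
  ring

lemma fAux_anti : StrictAntiOn fAux (Set.Icc 0 (4*π/3)) := by
  have hc : ContinuousOn fAux (Set.Icc 0 (4*π/3)) :=
    fun x _ => (fAux_hasDeriv x).continuousAt.continuousWithinAt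
  apply strictAntiOn_of_deriv_neg (convex_Icc _ _) hc
  intro x hx
  rw [interior_Icc] at hx
  rw [(fAux_hasDeriv x).deriv]
  have hπ := Real.pi_pos
  have hs : 0 < Real.sin (x/2) := by
    apply Real.sin_pos_of_pos_of_lt_pi (by linarith [hx.1])
    nlinarith [hx.2]
  have : (3*x - 4*π)/2 < 0 := by nlinarith [hx.2]
  exact mul_neg_of_neg_of_pos this hs

lemma fAux_mono : StrictMonoOn fAux (Set.Icc (4*π/3) (2*π)) := by
  have hc : ContinuousOn fAux (Set.Icc (4*π/3) (2*π)) :=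
    fun x _ => (fAux_hasDeriv x).continuousAt.continuousWithinAt
  apply strictMonoOn_of_deriv_pos (convex_Icc _ _) hc
  intro x hx
  rw [interior_Icc] at hx
  rw [(fAux_hasDeriv x).deriv]
  have hπ := Real.pi_pos
  have hs : 0 < Real.sin (x/2) := by
    apply Real.sin_pos_of_pos_of_lt_pi (by nlinarith [hx.1])
    nlinarith [hx.2]
  have : 0 < (3*x - 4*π)/2 := by nlinarith [hx.1]
  exact mul_pos this hs

lemma fAux_gt (α : ℝ) (hα : α ∈ Set.Icc (0:ℝ) (2*π)) (hne : α ≠ 4*π/3) :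
    3 * Real.sqrt 3 < fAux α := by
  have hπ := Real.pi_pos
  rcases lt_or_gt_of_ne hne with h | h
  · have := fAux_anti ⟨hα.1, le_of_lt h⟩ ⟨by linarith, le_refl _⟩ h
    rwa [fAux_val] at this
  · have := fAux_mono ⟨le_refl _, by linarith⟩ ⟨le_of_lt h, hα.2⟩ h
    rwa [fAux_val] at this

theorem stmt4 :
    (∀ α ∈ Set.Icc (0:ℝ) (2*π),
      3 * Real.sqrt 3 ≤ gammaX α + 2 * gammaY α ∧
      (gammaX α + 2 * gammaY α = 3 * Real.sqrt 3 ↔ α = 4*π/3)) ∧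
    gammaX (4*π/3) = Real.sqrt 3 + 2*π/3 ∧ gammaY (4*π/3) = Real.sqrt 3 - π/3 := by
  have h : (4*π/3)/2 = 2*π/3 := by ring
  refine ⟨fun α hα => ?_, ?_, ?_⟩
  · rw [fAux_eq]
    by_cases hne : α = 4*π/3
    · subst hne
      rw [fAux_val]
      exact ⟨le_refl _, by simp⟩
    · have := fAux_gt α hα hne
      exact ⟨le_of_lt this, by constructor <;> intro h' <;> [exact absurd h'.symm (ne_of_lt this); exact absurd h' hne]⟩
  · unfold gammaX; rw [h, sin_2pi3, cos_2pi3]; ring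
  · unfold gammaY; rw [h, sin_2pi3, cos_2pi3]; ring
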